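/- Convexity/concavity lemma: for positive reals n_1,…,n_k, define f_k(u) = Π_{i=1}^k (1+2n_i u)/(1+n_i u) and g_k(u) = Π_{i=1}^k 1/(1+n_i u) on (0,∞). Then g_k is convex for every k, f_k is strictly concave for k = 1, 2, 3, and consequently for k ≤ 3 one has 1 − (Σ n_i)u ≤ g_k(u) ≤ f_k(u) ≤ 1 + (Σ n_i)u. -/

import Mathlib

noncomputable section

/-- The set of positive normal floating point numbers with exponent `e`. -/
def Eset (β μ : ℕ) (e : ℤ) : Set ℝ :=
  {x | ∃ r : ℕ, r < (β - 1) * β ^ μ ∧ x = (β : ℝ) ^ e * ((β : ℝ) ^ μ + r)}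

/-- Perfect floating point system: all integer exponents. -/
def PerfectF (β μ : ℕ) : Set ℝ :=
  {x | x = 0 ∨ ∃ e : ℤ, x ∈ Eset β μ e ∨ -x ∈ Eset β μ e}

/-- MPFR system: exponents bounded below by `emin`, no subnormals. -/
def MPFRF (β μ : ℕ) (emin : ℤ) : Set ℝ :=
  {x | x = 0 ∨ ∃ e : ℤ, emin ≤ e ∧ (x ∈ Eset β μ e ∨ -x ∈ Eset β μ e)}

/-- Subnormal numbers (both signs) for minimal exponent `emin`. -/
def SubN (β μ : ℕ) (emin : ℤ) : Set ℝ :=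
  {x | ∃ r : ℕ, 1 ≤ r ∧ r < β ^ μ ∧ (x = (β : ℝ) ^ emin * r ∨ x = -((β : ℝ) ^ emin * r))}

/-- IEEE system: MPFR system augmented with subnormal numbers. -/
def IEEEF (β μ : ℕ) (emin : ℤ) : Set ℝ := MPFRF β μ emin ∪ SubN β μ emin

/-- `fl` rounds to nearest in `F`. -/
def RTN (F : Set ℝ) (fl : ℝ → ℝ) : Prop :=
  ∀ z : ℝ, fl z ∈ F ∧ ∀ x ∈ F, |fl z - z| ≤ |x - z|

/-- Recursively rounded sum: `rsum fl y 0 = y 0`,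
`rsum fl y (k+1) = fl (k+1) (rsum fl y k + y (k+1))`. -/
def rsum (fl : ℕ → ℝ → ℝ) (y : ℕ → ℝ) : ℕ → ℝ
  | 0 => y 0
  | k + 1 => fl (k + 1) (rsum fl y k + y (k + 1))

/-- Ties are broken downward. -/
def BreaksTiesDown (F : Set ℝ) (fl : ℝ → ℝ) : Prop :=
  ∀ z : ℝ, ∀ x ∈ F, |x - z| = |fl z - z| → fl z ≤ x

/-- Ties are broken upward. -/
def BreaksTiesUp (F : Set ℝ) (fl : ℝ → ℝ) : Prop :=
  ∀ z : ℝ, ∀ x ∈ F, |x - z| = |fl z - z| → x ≤ fl z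


section Stmt11Aux
set_option maxHeartbeats 1000000
open Set

noncomputable def ph (a u : ℝ) : ℝ := (1 + 2*a*u) / (1 + a*u)
noncomputable def phD (a u : ℝ) : ℝ := a / (1 + a*u)^2
noncomputable def phDD (a u : ℝ) : ℝ := -2*a^2 / (1 + a*u)^3

lemma hph {a x : ℝ} (h : (1:ℝ) + a*x ≠ 0) : HasDerivAt (ph a) (phD a x) x := by
  have h1 : HasDerivAt (fun u : ℝ => 1 + 2*a*u) (2*a) x := by
    simpa using ((hasDerivAt_id x).const_mul (2*a)).const_add 1
  have h2 : HasDerivAt (fun u : ℝ => 1 + a*u) a x := by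
    simpa using ((hasDerivAt_id x).const_mul a).const_add 1
  have := h1.div h2 h
  refine this.congr_deriv ?_
  unfold phD; field_simp; ring

lemma hphD {a x : ℝ} (h : (1:ℝ) + a*x ≠ 0) : HasDerivAt (phD a) (phDD a x) x := by
  have h2 : HasDerivAt (fun u : ℝ => 1 + a*u) a x := by
    simpa using ((hasDerivAt_id x).const_mul a).const_add 1
  have h3 : HasDerivAt (fun u : ℝ => (1 + a*u)^2) (2*(1+a*x)^1*a) x := h2.pow 2
  have h4 := (hasDerivAt_const x a).div h3 (pow_ne_zero 2 h)
  refine h4.congr_deriv ?_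
  unfold phDD; field_simp; ring

lemma deriv2_eq {f f1 f2 : ℝ → ℝ} (h1 : ∀ x ∈ Ioi (0:ℝ), HasDerivAt f (f1 x) x)
    (h2 : ∀ x ∈ Ioi (0:ℝ), HasDerivAt f1 (f2 x) x) {x : ℝ} (hx : x ∈ Ioi (0:ℝ)) :
    deriv^[2] f x = f2 x := by
  have hEq : deriv f =ᶠ[nhds x] f1 :=
    Filter.eventuallyEq_of_mem (isOpen_Ioi.mem_nhds hx) (fun y hy => (h1 y hy).deriv)
  show deriv (deriv f) x = f2 x
  rw [hEq.deriv_eq, (h2 x hx).deriv]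

lemma key2 {p q r e f g : ℝ} (hp : 0 < p) (hq : 0 ≤ q) (hr : 0 ≤ r)
    (he : 1 < e) (hf : 1 ≤ f) (hg : 1 ≤ g) :
    p*q + p*r + q*r < p^2*e + q^2*f + r^2*g := by
  nlinarith [sq_nonneg (p-q), sq_nonneg (q-r), sq_nonneg (r-p), mul_pos hp hp,
    sq_nonneg q, sq_nonneg r]

lemma keyRL {a b c x : ℝ} (ha : 0 < a) (hb : 0 ≤ b) (hc : 0 ≤ c) (hx : 0 < x) :
    a*b*(1+a*x)*(1+b*x)*(1+2*c*x)*(1+c*x)^2 + a*c*(1+a*x)*(1+c*x)*(1+2*b*x)*(1+b*x)^2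
      + b*c*(1+b*x)*(1+c*x)*(1+2*a*x)*(1+a*x)^2
    < a^2*(1+2*b*x)*(1+2*c*x)*(1+b*x)^2*(1+c*x)^2 + b^2*(1+2*a*x)*(1+2*c*x)*(1+a*x)^2*(1+c*x)^2
      + c^2*(1+2*a*x)*(1+2*b*x)*(1+a*x)^2*(1+b*x)^2 := by
  have hA : (0:ℝ) < 1+a*x := by nlinarith
  have hB : (0:ℝ) < 1+b*x := by nlinarith [mul_nonneg hb hx.le]
  have hC : (0:ℝ) < 1+c*x := by nlinarith [mul_nonneg hc hx.le]
  have hA2 : (1:ℝ) < 1+2*a*x := by nlinarith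
  have hB2 : (1:ℝ) ≤ 1+2*b*x := by nlinarith [mul_nonneg hb hx.le]
  have hC2 : (1:ℝ) ≤ 1+2*c*x := by nlinarith [mul_nonneg hc hx.le]
  set p := a/((1+a*x)*(1+2*a*x)) with hpdef
  set q := b/((1+b*x)*(1+2*b*x)) with hqdef
  set r := c/((1+c*x)*(1+2*c*x)) with hrdef
  have hp : 0 < p := div_pos ha (by positivity)
  have hq : 0 ≤ q := div_nonneg hb (by positivity)
  have hr : 0 ≤ r := div_nonneg hc (by positivity)
  have hD : (0:ℝ) < (1+a*x)^2*(1+2*a*x)*((1+b*x)^2*(1+2*b*x))*((1+c*x)^2*(1+2*c*x)) := by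
    positivity
  have hL : a^2*(1+2*b*x)*(1+2*c*x)*(1+b*x)^2*(1+c*x)^2
        + b^2*(1+2*a*x)*(1+2*c*x)*(1+a*x)^2*(1+c*x)^2
        + c^2*(1+2*a*x)*(1+2*b*x)*(1+a*x)^2*(1+b*x)^2
      = (p^2*(1+2*a*x) + q^2*(1+2*b*x) + r^2*(1+2*c*x)) *
        ((1+a*x)^2*(1+2*a*x)*((1+b*x)^2*(1+2*b*x))*((1+c*x)^2*(1+2*c*x))) := by
    rw [hpdef, hqdef, hrdef]; field_simp
  have hR : a*b*(1+a*x)*(1+b*x)*(1+2*c*x)*(1+c*x)^2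
        + a*c*(1+a*x)*(1+c*x)*(1+2*b*x)*(1+b*x)^2
        + b*c*(1+b*x)*(1+c*x)*(1+2*a*x)*(1+a*x)^2
      = (p*q + p*r + q*r) *
        ((1+a*x)^2*(1+2*a*x)*((1+b*x)^2*(1+2*b*x))*((1+c*x)^2*(1+2*c*x))) := by
    rw [hpdef, hqdef, hrdef]; field_simp
  rw [hL, hR]
  exact mul_lt_mul_of_pos_right (key2 hp hq hr hA2 hB2 hC2) hD

lemma prim1 (a b c x : ℝ) (hA : (1:ℝ)+a*x ≠ 0) (hB : (1:ℝ)+b*x ≠ 0) (hC : (1:ℝ)+c*x ≠ 0) :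
    phDD a x * ph b x * ph c x
    = (-2*a^2*(1+2*b*x)*(1+2*c*x)*(1+b*x)^2*(1+c*x)^2)/((1+a*x)^3*(1+b*x)^3*(1+c*x)^3) := by
  simp only [ph, phD, phDD]; field_simp

lemma prim2 (a b c x : ℝ) (hA : (1:ℝ)+a*x ≠ 0) (hB : (1:ℝ)+b*x ≠ 0) (hC : (1:ℝ)+c*x ≠ 0) :
    phD a x * phD b x * ph c x
    = (a*b*(1+a*x)*(1+b*x)*(1+2*c*x)*(1+c*x)^2)/((1+a*x)^3*(1+b*x)^3*(1+c*x)^3) := by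
  simp only [ph, phD, phDD]; field_simp

lemma prim3 (a b c x : ℝ) (hA : (1:ℝ)+a*x ≠ 0) (hB : (1:ℝ)+b*x ≠ 0) (hC : (1:ℝ)+c*x ≠ 0) :
    phD a x * ph b x * phD c x
    = (a*c*(1+a*x)*(1+c*x)*(1+2*b*x)*(1+b*x)^2)/((1+a*x)^3*(1+b*x)^3*(1+c*x)^3) := by
  simp only [ph, phD, phDD]; field_simp

lemma prim4 (a b c x : ℝ) (hA : (1:ℝ)+a*x ≠ 0) (hB : (1:ℝ)+b*x ≠ 0) (hC : (1:ℝ)+c*x ≠ 0) :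
    ph a x * phD b x * phD c x
    = (b*c*(1+b*x)*(1+c*x)*(1+2*a*x)*(1+a*x)^2)/((1+a*x)^3*(1+b*x)^3*(1+c*x)^3) := by
  simp only [ph, phD, phDD]; field_simp

lemma prim5 (a b c x : ℝ) (hA : (1:ℝ)+a*x ≠ 0) (hB : (1:ℝ)+b*x ≠ 0) (hC : (1:ℝ)+c*x ≠ 0) :
    ph a x * phDD b x * ph c x
    = (-2*b^2*(1+2*a*x)*(1+2*c*x)*(1+a*x)^2*(1+c*x)^2)/((1+a*x)^3*(1+b*x)^3*(1+c*x)^3) := by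
  simp only [ph, phD, phDD]; field_simp

lemma prim6 (a b c x : ℝ) (hA : (1:ℝ)+a*x ≠ 0) (hB : (1:ℝ)+b*x ≠ 0) (hC : (1:ℝ)+c*x ≠ 0) :
    ph a x * ph b x * phDD c x
    = (-2*c^2*(1+2*a*x)*(1+2*b*x)*(1+a*x)^2*(1+b*x)^2)/((1+a*x)^3*(1+b*x)^3*(1+c*x)^3) := by
  simp only [ph, phD, phDD]; field_simp

lemma f3_strictConcave {a b c : ℝ} (ha : 0 < a) (hb : 0 ≤ b) (hc : 0 ≤ c) :
    StrictConcaveOn ℝ (Ioi (0:ℝ)) (fun u => ph a u * ph b u * ph c u) := by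
  have hpos : ∀ (e x : ℝ), 0 ≤ e → x ∈ Ioi (0:ℝ) → (0:ℝ) < 1 + e*x := by
    intro e x he hx
    have := mul_nonneg he (le_of_lt (mem_Ioi.mp hx))
    linarith
  set f1 : ℝ → ℝ := fun x =>
    (phD a x * ph b x + ph a x * phD b x) * ph c x + ph a x * ph b x * phD c x with hf1def
  set f2 : ℝ → ℝ := fun x =>
    phDD a x * ph b x * ph c x + phD a x * phD b x * ph c x
    + phD a x * phD b x * ph c x + ph a x * phDD b x * ph c x
    + phD a x * ph b x * phD c x + ph a x * phD b x * phD c x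
    + phD a x * ph b x * phD c x + ph a x * phD b x * phD c x
    + ph a x * ph b x * phDD c x with hf2def
  have h1 : ∀ x ∈ Ioi (0:ℝ), HasDerivAt (fun u => ph a u * ph b u * ph c u) (f1 x) x := by
    intro x hx
    exact ((hph (hpos a x ha.le hx).ne').mul (hph (hpos b x hb hx).ne')).mul
      (hph (hpos c x hc hx).ne')
  have h2 : ∀ x ∈ Ioi (0:ℝ), HasDerivAt f1 (f2 x) x := by
    intro x hx
    have hA := (hpos a x ha.le hx).ne'
    have hB := (hpos b x hb hx).ne'
    have hC := (hpos c x hc hx).ne'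
    have := ((((hphD hA).mul (hph hB)).add ((hph hA).mul (hphD hB))).mul (hph hC)).add
      (((hph hA).mul (hph hB)).mul (hphD hC))
    refine this.congr_deriv ?_
    rw [hf2def]; simp only [Pi.add_apply, Pi.mul_apply]; ring
  apply strictConcaveOn_of_deriv2_neg (convex_Ioi 0)
  · intro x hx
    exact (h1 x hx).continuousAt.continuousWithinAt
  · rw [interior_Ioi]
    intro x hx
    rw [deriv2_eq h1 h2 hx]
    have hA := (hpos a x ha.le hx).ne'
    have hB := (hpos b x hb hx).ne'
    have hC := (hpos c x hc hx).ne'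
    have hx0 := mem_Ioi.mp hx
    have hD : (0:ℝ) < (1+a*x)^3*(1+b*x)^3*(1+c*x)^3 := by
      have := hpos a x ha.le hx; have := hpos b x hb hx; have := hpos c x hc hx
      positivity
    rw [hf2def]
    simp only [prim1 a b c x hA hB hC, prim2 a b c x hA hB hC, prim3 a b c x hA hB hC,
      prim4 a b c x hA hB hC, prim5 a b c x hA hB hC, prim6 a b c x hA hB hC,
      ← add_div]
    apply div_neg_of_neg_of_pos _ hD
    have := keyRL ha hb hc hx0
    linarith

lemma invFactor {a : ℝ} (ha : 0 < a) :
    ConvexOn ℝ (Ioi (0:ℝ)) (fun u => (1 + a*u)⁻¹) := by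
  have hpos : ∀ x ∈ Ioi (0:ℝ), (0:ℝ) < 1 + a*x := by
    intro x hx
    have := mul_nonneg ha.le (le_of_lt (mem_Ioi.mp hx))
    linarith
  have hlin : ∀ x : ℝ, HasDerivAt (fun u : ℝ => 1 + a*u) a x := by
    intro x; simpa using ((hasDerivAt_id x).const_mul a).const_add 1
  have h1 : ∀ x ∈ Ioi (0:ℝ), HasDerivAt (fun u => (1 + a*u)⁻¹) (-(a/(1+a*x)^2)) x := by
    intro x hx
    have := (hlin x).inv (hpos x hx).ne'
    refine this.congr_deriv ?_; ring
  have h2 : ∀ x ∈ Ioi (0:ℝ), HasDerivAt (fun x => -(a/(1+a*x)^2)) (2*a^2/(1+a*x)^3) x := by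
    intro x hx
    have h3 : HasDerivAt (fun u : ℝ => (1 + a*u)^2) (2*(1+a*x)^1*a) x := (hlin x).pow 2
    have h4 := ((hasDerivAt_const x a).div h3 (pow_ne_zero 2 (hpos x hx).ne')).neg
    refine h4.congr_deriv ?_
    have := (hpos x hx).ne'
    field_simp
    ring
  refine (strictConvexOn_of_deriv2_pos (convex_Ioi 0) ?_ ?_).convexOn
  · intro x hx
    exact (h1 x hx).continuousAt.continuousWithinAt
  · rw [interior_Ioi]
    intro x hx
    rw [deriv2_eq h1 h2 hx]
    have := hpos x hx
    positivity

lemma invAntitone {a : ℝ} (ha : 0 < a) :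
    AntitoneOn (fun u => (1 + a*u)⁻¹) (Ioi (0:ℝ)) := by
  intro x hx y hy hxy
  have hx' : (0:ℝ) < 1 + a*x := by
    have := mul_nonneg ha.le (le_of_lt (mem_Ioi.mp hx)); linarith
  have : (1:ℝ) + a*x ≤ 1 + a*y := by nlinarith
  exact inv_anti₀ hx' this

lemma gAux {k : ℕ} (s : Finset (Fin k)) (n : Fin k → ℝ) (hn : ∀ i, 0 < n i) :
    ConvexOn ℝ (Ioi (0:ℝ)) (fun u => ∏ i ∈ s, (1 + n i * u)⁻¹) ∧
    AntitoneOn (fun u => ∏ i ∈ s, (1 + n i * u)⁻¹) (Ioi (0:ℝ)) ∧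
    ∀ x ∈ Ioi (0:ℝ), (0:ℝ) ≤ ∏ i ∈ s, (1 + n i * x)⁻¹ := by
  induction s using Finset.cons_induction with
  | empty =>
    simp only [Finset.prod_empty]
    exact ⟨convexOn_const 1 (convex_Ioi 0), antitoneOn_const, fun x _ => zero_le_one⟩
  | cons a s ha ih =>
    obtain ⟨ihc, iha, ihn⟩ := ih
    simp only [Finset.prod_cons]
    have hfn : ∀ x ∈ Ioi (0:ℝ), (0:ℝ) ≤ (1 + n a * x)⁻¹ := by
      intro x hx
      have := mul_nonneg (hn a).le (le_of_lt (mem_Ioi.mp hx))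
      positivity
    have hconv : ConvexOn ℝ (Ioi (0:ℝ))
        ((fun u => (1 + n a * u)⁻¹) * (fun u => ∏ i ∈ s, (1 + n i * u)⁻¹)) :=
      (invFactor (hn a)).mul ihc hfn ihn ((invAntitone (hn a)).monovaryOn iha)
    refine ⟨hconv, ?_, ?_⟩
    · intro x hx y hy hxy
      exact mul_le_mul ((invAntitone (hn a)) hx hy hxy) (iha hx hy hxy) (ihn y hy) (hfn x hx)
    · intro x hx
      exact mul_nonneg (hfn x hx) (ihn x hx)

lemma weier {ι : Type*} (s : Finset ι) (t : ι → ℝ) (ht : ∀ i, 0 ≤ t i) :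
    (1 - ∑ i ∈ s, t i) * ∏ i ∈ s, (1 + t i) ≤ 1 := by
  induction s using Finset.cons_induction with
  | empty => simp
  | cons a s ha ih =>
    rw [Finset.sum_cons, Finset.prod_cons]
    have hP : (0:ℝ) ≤ ∏ i ∈ s, (1 + t i) := Finset.prod_nonneg fun i _ => by linarith [ht i]
    have hS : (0:ℝ) ≤ ∑ i ∈ s, t i := Finset.sum_nonneg fun i _ => ht i
    have hta := ht a
    nlinarith [mul_nonneg (mul_nonneg hta hS) hP, mul_nonneg (mul_nonneg hta hta) hP]

lemma keyProd3 {A B C : ℝ} (hA : 0 ≤ A) (hB : 0 ≤ B) (hC : 0 ≤ C) :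
    (1+2*A)*(1+2*B)*(1+2*C) ≤ (1+(A+B+C))*((1+A)*(1+B)*(1+C)) := by
  nlinarith [sq_nonneg (A-B), sq_nonneg (B-C), sq_nonneg (A-C),
    mul_nonneg hC (sq_nonneg (A-B)), mul_nonneg hA (sq_nonneg (B-C)),
    mul_nonneg hB (sq_nonneg (A-C)), mul_nonneg (mul_nonneg hA hB) hC,
    mul_nonneg (mul_nonneg (mul_nonneg hA hB) hC) (add_nonneg (add_nonneg hA hB) hC)]

lemma ineq1 {k : ℕ} (n : Fin k → ℝ) (hn : ∀ i, 0 < n i) {u : ℝ} (hu : 0 < u) :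
    1 - (∑ i, n i) * u ≤ ∏ i, 1 / (1 + n i * u) := by
  have hP : (0:ℝ) < ∏ i, (1 + n i * u) :=
    Finset.prod_pos fun i _ => by nlinarith [hn i, mul_pos (hn i) hu]
  have hw := weier Finset.univ (fun i => n i * u) (fun i => (mul_pos (hn i) hu).le)
  rw [← Finset.sum_mul] at hw
  have hprod : (∏ i, 1 / (1 + n i * u)) = 1 / ∏ i, (1 + n i * u) := by
    simp [one_div, Finset.prod_inv_distrib]
  rw [hprod, le_div_iff₀ hP]
  exact hw

lemma ineq2 {k : ℕ} (n : Fin k → ℝ) (hn : ∀ i, 0 < n i) {u : ℝ} (hu : 0 < u) :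
    (∏ i, 1 / (1 + n i * u)) ≤ ∏ i, (1 + 2 * n i * u) / (1 + n i * u) := by
  apply Finset.prod_le_prod
  · intro i _
    have := mul_pos (hn i) hu
    positivity
  · intro i _
    have hd : (0:ℝ) < 1 + n i * u := by nlinarith [mul_pos (hn i) hu]
    exact (div_le_div_iff_of_pos_right hd).mpr (by nlinarith [mul_pos (hn i) hu])

end Stmt11Aux

theorem stmt11 (k : ℕ) (hk : 1 ≤ k) (n : Fin k → ℝ) (hn : ∀ i, 0 < n i) :
    ConvexOn ℝ (Set.Ioi (0 : ℝ)) (fun u => ∏ i, 1 / (1 + n i * u)) ∧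
    (k ≤ 3 →
      StrictConcaveOn ℝ (Set.Ioi (0 : ℝ)) (fun u => ∏ i, (1 + 2 * n i * u) / (1 + n i * u)) ∧
      ∀ u : ℝ, 0 < u →
        1 - (∑ i, n i) * u ≤ ∏ i, 1 / (1 + n i * u) ∧
        (∏ i, 1 / (1 + n i * u)) ≤ ∏ i, (1 + 2 * n i * u) / (1 + n i * u) ∧
        (∏ i, (1 + 2 * n i * u) / (1 + n i * u)) ≤ 1 + (∑ i, n i) * u) := by
  constructor
  · have h := (gAux Finset.univ n hn).1
    simpa only [one_div] using h
  · intro h3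
    constructor
    · -- strict concavity
      interval_cases k
      · have h := f3_strictConcave (a := n 0) (b := 0) (c := 0) (hn 0) le_rfl le_rfl
        have hfun : (fun u : ℝ => ∏ i, (1 + 2 * n i * u) / (1 + n i * u))
            = fun u => ph (n 0) u * ph 0 u * ph 0 u := by
          funext u; simp only [Fin.prod_univ_one, ph]; norm_num
        rw [hfun]; exact h
      · have h := f3_strictConcave (a := n 0) (b := n 1) (c := 0) (hn 0) (hn 1).le le_rfl
        have hfun : (fun u : ℝ => ∏ i, (1 + 2 * n i * u) / (1 + n i * u))
            = fun u => ph (n 0) u * ph (n 1) u * ph 0 u := by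
          funext u; simp only [Fin.prod_univ_two, ph]; norm_num
        rw [hfun]; exact h
      · have h := f3_strictConcave (a := n 0) (b := n 1) (c := n 2) (hn 0) (hn 1).le (hn 2).le
        have hfun : (fun u : ℝ => ∏ i, (1 + 2 * n i * u) / (1 + n i * u))
            = fun u => ph (n 0) u * ph (n 1) u * ph (n 2) u := by
          funext u; simp only [Fin.prod_univ_three, ph]
        rw [hfun]; exact h
    · intro u hu
      refine ⟨ineq1 n hn hu, ineq2 n hn hu, ?_⟩
      interval_cases k
      · simp only [Fin.prod_univ_one, Fin.sum_univ_one]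
        have hd : (0:ℝ) < 1 + n 0 * u := by nlinarith [mul_pos (hn 0) hu]
        rw [div_le_iff₀ hd]
        nlinarith [mul_pos (hn 0) hu]
      · simp only [Fin.prod_univ_two, Fin.sum_univ_two]
        have hd0 : (0:ℝ) < 1 + n 0 * u := by nlinarith [mul_pos (hn 0) hu]
        have hd1 : (0:ℝ) < 1 + n 1 * u := by nlinarith [mul_pos (hn 1) hu]
        rw [div_mul_div_comm, div_le_iff₀ (by positivity)]
        nlinarith [keyProd3 (mul_pos (hn 0) hu).le (mul_pos (hn 1) hu).le (le_refl (0:ℝ))]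
      · simp only [Fin.prod_univ_three, Fin.sum_univ_three]
        have hd0 : (0:ℝ) < 1 + n 0 * u := by nlinarith [mul_pos (hn 0) hu]
        have hd1 : (0:ℝ) < 1 + n 1 * u := by nlinarith [mul_pos (hn 1) hu]
        have hd2 : (0:ℝ) < 1 + n 2 * u := by nlinarith [mul_pos (hn 2) hu]
        rw [div_mul_div_comm, div_mul_div_comm, div_le_iff₀ (by positivity)]
        nlinarith [keyProd3 (mul_pos (hn 0) hu).le (mul_pos (hn 1) hu).le
          (mul_pos (hn 2) hu).le]
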